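/- Let T = ℤ[s,t]/(s² − 2s, t² − 4t, st − 2t). Then the ideal of T generated by the two elements t − 2s and −t + 3s − 2 equals the kernel of the (well-defined) ring homomorphism T → ℤ determined by s ↦ 2 and t ↦ 4. -/
import Mathlib


open MvPolynomial

noncomputable section

/-- Presentation of the Burnside ring `A(C₄) = ℤ[s,t]/(s² - 2s, t² - 4t, st - 2t)`,
with `X 0 = s = [C₄/C₂]` and `X 1 = t = [C₄/e]`. -/
def relT : Ideal (MvPolynomial (Fin 2) ℤ) :=
  Ideal.span {X 0 ^ 2 - 2 * X 0, X 1 ^ 2 - 4 * X 1, X 0 * X 1 - 2 * X 1}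

abbrev T : Type := MvPolynomial (Fin 2) ℤ ⧸ relT

def sT : T := Ideal.Quotient.mk relT (X 0)
def tT : T := Ideal.Quotient.mk relT (X 1)

/-- aux: every polynomial minus its value lies in the span of `X i - C (v i)`. -/
lemma sub_eval_mem (v : Fin 2 → ℤ) (p : MvPolynomial (Fin 2) ℤ) :
    p - C (eval v p) ∈ Ideal.span {X 0 - C (v 0), X 1 - C (v 1)} := by
  induction p using MvPolynomial.induction_on with
  | C a => simp
  | add p q hp hq =>
      have := Ideal.add_mem _ hp hq
      convert this using 1
      rw [eval_add, map_add]; ring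
  | mul_X p i hp =>
      have h1 : (p - C (eval v p)) * X i ∈
          Ideal.span {X 0 - C (v 0), X 1 - C (v 1)} := Ideal.mul_mem_right _ _ hp
      have h2 : (X i - C (v i)) * C (eval v p) ∈
          Ideal.span {X 0 - C (v 0), X 1 - C (v 1)} := by
        apply Ideal.mul_mem_right
        fin_cases i
        · exact Ideal.subset_span (Or.inl rfl)
        · exact Ideal.subset_span (Or.inr rfl)
      have := Ideal.add_mem _ h1 h2
      convert this using 1
      rw [eval_mul, eval_X, map_mul]; ring

set_option maxHeartbeats 1000000 in
theorem stmt4 :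
    (∃ φ : T →+* ℤ, φ sT = 2 ∧ φ tT = 4) ∧
    (∀ φ : T →+* ℤ, (φ sT = 2 ∧ φ tT = 4) →
      Ideal.span {tT - 2 * sT, -tT + 3 * sT - 2} = RingHom.ker φ) := by
  constructor
  · -- existence
    have hle : relT ≤ RingHom.ker (eval (![2, 4] : Fin 2 → ℤ)) := by
      rw [relT, Ideal.span_le]
      rintro x (rfl | rfl | rfl) <;> simp [RingHom.mem_ker]
    refine ⟨Ideal.Quotient.lift relT (eval (![2, 4] : Fin 2 → ℤ))
      (fun a ha => RingHom.mem_ker.mp (hle ha)), ?_, ?_⟩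
    · simp [sT]
    · simp [tT]
  · rintro φ ⟨hs, ht⟩
    have hφC : ∀ n : ℤ, φ (Ideal.Quotient.mk relT (C n)) = n := fun n =>
      (eq_intCast ((φ.comp (Ideal.Quotient.mk relT)).comp
        (C : ℤ →+* MvPolynomial (Fin 2) ℤ)) n).trans (Int.cast_id)
    have key : ∀ p : MvPolynomial (Fin 2) ℤ,
        φ (Ideal.Quotient.mk relT p) = eval (![2, 4] : Fin 2 → ℤ) p := by
      intro p
      induction p using MvPolynomial.induction_on with
      | C a => simp [hφC a]
      | add p q hp hq => simp [map_add, hp, hq]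
      | mul_X p i hp =>
          rw [map_mul, map_mul, hp, eval_mul, eval_X]
          congr 1
          fin_cases i
          · exact hs
          · exact ht
    apply le_antisymm
    · rw [Ideal.span_le]
      have h2 : φ (2 : T) = 2 := map_ofNat φ 2
      have h3 : φ (3 : T) = 3 := map_ofNat φ 3
      rintro x (rfl | rfl) <;>
        · simp only [SetLike.mem_coe, RingHom.mem_ker]
          simp only [map_sub, map_add, map_neg, map_mul, hs, ht, h2, h3]
          norm_num
    · intro x hx
      obtain ⟨p, rfl⟩ := Ideal.Quotient.mk_surjective x
      have hev : eval (![2, 4] : Fin 2 → ℤ) p = 0 := by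
        rw [← key]; exact hx
      have hmem := sub_eval_mem ![2, 4] p
      rw [hev, map_zero, sub_zero] at hmem
      -- now push through mk
      have h0 : Ideal.Quotient.mk relT (X 0 - C ((![2,4] : Fin 2 → ℤ) 0)) ∈
          Ideal.span {tT - 2 * sT, -tT + 3 * sT - 2} := by
        have mkC2 : Ideal.Quotient.mk relT (C (2:ℤ)) = 2 := by
          rw [map_ofNat, map_ofNat]
        have e : Ideal.Quotient.mk relT (X 0 - C ((![2,4] : Fin 2 → ℤ) 0)) =
            (tT - 2 * sT) + (-tT + 3 * sT - 2) := by
          rw [show ((![2,4] : Fin 2 → ℤ) 0) = 2 from rfl, map_sub, mkC2,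
            show (Ideal.Quotient.mk relT) (X 0) = sT from rfl]
          ring
        rw [e]
        exact Ideal.add_mem _ (Ideal.subset_span (Or.inl rfl))
          (Ideal.subset_span (Or.inr rfl))
      have h1 : Ideal.Quotient.mk relT (X 1 - C ((![2,4] : Fin 2 → ℤ) 1)) ∈
          Ideal.span {tT - 2 * sT, -tT + 3 * sT - 2} := by
        have mkC4 : Ideal.Quotient.mk relT (C (4:ℤ)) = 4 := by
          rw [map_ofNat, map_ofNat]
        have e : Ideal.Quotient.mk relT (X 1 - C ((![2,4] : Fin 2 → ℤ) 1)) =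
            (tT - 2 * sT) + 2 * ((tT - 2 * sT) + (-tT + 3 * sT - 2)) := by
          rw [show ((![2,4] : Fin 2 → ℤ) 1) = 4 from rfl, map_sub, mkC4,
            show (Ideal.Quotient.mk relT) (X 1) = tT from rfl]
          ring
        rw [e]
        exact Ideal.add_mem _ (Ideal.subset_span (Or.inl rfl))
          (Ideal.mul_mem_left _ _ (Ideal.add_mem _ (Ideal.subset_span (Or.inl rfl))
            (Ideal.subset_span (Or.inr rfl))))
      refine Submodule.span_induction ?_ ?_ ?_ ?_ hmem
      · rintro y (rfl | rfl)
        · exact h0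
        · exact h1
      · simp
      · intro a b _ _ ha hb
        rw [map_add]; exact Ideal.add_mem _ ha hb
      · intro a b _ hb
        rw [smul_eq_mul, map_mul]
        exact Ideal.mul_mem_left _ _ hb
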